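/- (Saavedra Rivano) If θ : F → G is a monoidal natural transformation between strong monoidal functors F, G : C → D and A has a right dual A* in C, then θ_{A*} is invertible, with inverse given (up to the canonical isomorphisms F(A*) ≅ (FA)* and G(A*) ≅ (GA)*) by the adjoint mate (θ_A)* of θ_A. In particular, if C is autonomous, every monoidal natural transformation between strong monoidal functors out of C is a natural isomorphism. -/

import Mathlib

open CategoryTheory MonoidalCategory

section SRAux
open Functor.LaxMonoidal Functor.OplaxMonoidal

open CategoryTheory MonoidalCategory Functor.LaxMonoidal Functor.OplaxMonoidal

variable {C D : Type*} [Category C] [Category D] [MonoidalCategory C] [MonoidalCategory D]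

lemma zigSR (F : C ⥤ D) [F.Monoidal] (X Y : C) [ExactPairing X Y] :
    (F.obj Y ◁ (ε F ≫ F.map (η_ X Y) ≫ δ F X Y)) ≫ (α_ (F.obj Y) (F.obj X) (F.obj Y)).inv ≫
      ((μ F Y X ≫ F.map (ε_ X Y) ≫ η F) ▷ F.obj Y) = (ρ_ (F.obj Y)).hom ≫ (λ_ (F.obj Y)).inv := by
  have mid : (α_ (F.obj Y) (F.obj X) (F.obj Y)).inv ≫ μ F Y X ▷ F.obj Y
      = F.obj Y ◁ μ F X Y ≫ μ F Y (X ⊗ Y) ≫ F.map (α_ Y X Y).inv ≫ δ F (Y ⊗ X) Y := by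
    rw [Functor.LaxMonoidal.associativity_inv_assoc, Functor.Monoidal.μ_δ]
    simp
  calc _ = (F.obj Y ◁ ε F) ≫ (F.obj Y ◁ F.map (η_ X Y)) ≫
        (F.obj Y ◁ δ F X Y) ≫ ((α_ _ _ _).inv ≫ (μ F Y X ▷ F.obj Y)) ≫
        (F.map (ε_ X Y) ▷ F.obj Y) ≫ (η F ▷ F.obj Y) := by
        simp only [MonoidalCategory.whiskerLeft_comp, MonoidalCategory.comp_whiskerRight,
          Category.assoc]
    _ = (F.obj Y ◁ ε F) ≫ μ F Y (𝟙_ C) ≫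
        F.map (Y ◁ η_ X Y) ≫ F.map ((α_ Y X Y).inv) ≫ F.map (ε_ X Y ▷ Y) ≫ δ F (𝟙_ C) Y ≫
        (η F ▷ F.obj Y) := by
        rw [mid]; simp only [Category.assoc]; rw [Functor.Monoidal.whiskerLeft_δ_μ_assoc,
          Functor.LaxMonoidal.μ_natural_right_assoc, Functor.OplaxMonoidal.δ_natural_left_assoc]
    _ = (F.obj Y ◁ ε F) ≫ μ F Y (𝟙_ C) ≫
        F.map ((ρ_ Y).hom) ≫ F.map ((λ_ Y).inv) ≫ δ F (𝟙_ C) Y ≫ (η F ▷ F.obj Y) := by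
        rw [← F.map_comp_assoc, ← F.map_comp_assoc, Category.assoc,
          ExactPairing.coevaluation_evaluation, F.map_comp_assoc]
    _ = _ := by simp

lemma keySR (F G : C ⥤ D) [F.Monoidal] [G.Monoidal] (θ : F ⟶ G) [NatTrans.IsMonoidal θ]
    (X Y : C) [ExactPairing X Y] :
    θ.app Y ≫ ((ρ_ (G.obj Y)).inv ≫ (G.obj Y ◁ (ε F ≫ F.map (η_ X Y) ≫ δ F X Y)) ≫
        (G.obj Y ◁ (θ.app X ▷ F.obj Y)) ≫ (α_ _ _ _).inv ≫
        ((μ G Y X ≫ G.map (ε_ X Y) ≫ η G) ▷ F.obj Y) ≫ (λ_ _).hom) = 𝟙 _ ∧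
      ((ρ_ (G.obj Y)).inv ≫ (G.obj Y ◁ (ε F ≫ F.map (η_ X Y) ≫ δ F X Y)) ≫
        (G.obj Y ◁ (θ.app X ▷ F.obj Y)) ≫ (α_ _ _ _).inv ≫
        ((μ G Y X ≫ G.map (ε_ X Y) ≫ η G) ▷ F.obj Y) ≫ (λ_ _).hom) ≫ θ.app Y = 𝟙 _ := by
  set coevF : 𝟙_ D ⟶ F.obj X ⊗ F.obj Y := ε F ≫ F.map (η_ X Y) ≫ δ F X Y with hcoevF
  set evG : G.obj Y ⊗ G.obj X ⟶ 𝟙_ D := μ G Y X ≫ G.map (ε_ X Y) ≫ η G with hevG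
  have happ : θ.app (𝟙_ C) ≫ η G = η F := by
    rw [← cancel_epi (ε F), NatTrans.IsMonoidal.unit_assoc (τ := θ),
      Functor.Monoidal.ε_η, Functor.Monoidal.ε_η]
  have fact_ev : (θ.app Y ⊗ₘ θ.app X) ≫ evG = μ F Y X ≫ F.map (ε_ X Y) ≫ η F := by
    rw [hevG, ← NatTrans.IsMonoidal.tensor_assoc (τ := θ), ← θ.naturality_assoc, happ]
  have fact_coev : coevF ≫ (θ.app X ⊗ₘ θ.app Y) = ε G ≫ G.map (η_ X Y) ≫ δ G X Y := by
    have hδ : δ F X Y ≫ (θ.app X ⊗ₘ θ.app Y) = θ.app (X ⊗ Y) ≫ δ G X Y := by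
      rw [← cancel_mono (μ G X Y), Category.assoc, Category.assoc,
        ← NatTrans.IsMonoidal.tensor (τ := θ), Functor.Monoidal.δ_μ_assoc,
        Functor.Monoidal.δ_μ, Category.comp_id]
    rw [hcoevF, Category.assoc, Category.assoc, hδ, θ.naturality_assoc,
      NatTrans.IsMonoidal.unit_assoc (τ := θ)]
  have zigF := reassoc_of% (zigSR F X Y)
  have zigG := reassoc_of% (zigSR G X Y)
  constructor
  · calc θ.app Y ≫ (ρ_ (G.obj Y)).inv ≫ (G.obj Y ◁ coevF) ≫
          (G.obj Y ◁ (θ.app X ▷ F.obj Y)) ≫ (α_ _ _ _).inv ≫ (evG ▷ F.obj Y) ≫ (λ_ _).hom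
        = (ρ_ (F.obj Y)).inv ≫ (F.obj Y ◁ coevF) ≫ (F.obj Y ◁ (θ.app X ▷ F.obj Y)) ≫
          (θ.app Y ▷ (G.obj X ⊗ F.obj Y)) ≫ (α_ _ _ _).inv ≫ (evG ▷ F.obj Y) ≫ (λ_ _).hom := by
          rw [rightUnitor_inv_naturality_assoc, ← whisker_exchange_assoc,
            ← whisker_exchange_assoc]
      _ = (ρ_ (F.obj Y)).inv ≫ (F.obj Y ◁ coevF) ≫ (α_ _ _ _).inv ≫
          ((F.obj Y ◁ θ.app X) ▷ F.obj Y) ≫ ((θ.app Y ▷ G.obj X) ▷ F.obj Y) ≫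
          (evG ▷ F.obj Y) ≫ (λ_ _).hom := by
          rw [associator_inv_naturality_left_assoc, associator_inv_naturality_middle_assoc]
      _ = (ρ_ (F.obj Y)).inv ≫ (F.obj Y ◁ coevF) ≫ (α_ _ _ _).inv ≫
          (((θ.app Y ⊗ₘ θ.app X) ≫ evG) ▷ F.obj Y) ≫ (λ_ _).hom := by
          simp only [MonoidalCategory.comp_whiskerRight, Category.assoc, tensorHom_def']
      _ = 𝟙 _ := by
          rw [fact_ev, hcoevF, zigF]
          simp
  · calc ((ρ_ (G.obj Y)).inv ≫ (G.obj Y ◁ coevF) ≫ (G.obj Y ◁ (θ.app X ▷ F.obj Y)) ≫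
          (α_ _ _ _).inv ≫ (evG ▷ F.obj Y) ≫ (λ_ _).hom) ≫ θ.app Y
        = (ρ_ (G.obj Y)).inv ≫ (G.obj Y ◁ coevF) ≫ (G.obj Y ◁ (θ.app X ▷ F.obj Y)) ≫
          (G.obj Y ◁ (G.obj X ◁ θ.app Y)) ≫ (α_ _ _ _).inv ≫ (evG ▷ G.obj Y) ≫ (λ_ _).hom := by
          simp only [Category.assoc]
          rw [← leftUnitor_naturality, ← whisker_exchange_assoc,
            ← associator_inv_naturality_right_assoc]
      _ = (ρ_ (G.obj Y)).inv ≫ (G.obj Y ◁ (coevF ≫ (θ.app X ⊗ₘ θ.app Y))) ≫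
          (α_ _ _ _).inv ≫ (evG ▷ G.obj Y) ≫ (λ_ _).hom := by
          simp only [MonoidalCategory.whiskerLeft_comp, Category.assoc, MonoidalCategory.tensorHom_def]
      _ = 𝟙 _ := by
          rw [fact_coev, hevG, zigG]
          simp

end SRAux


/-- (Saavedra Rivano) Let `θ : F ⟶ G` be a monoidal natural transformation between strong
monoidal functors `F, G : C ⥤ D`, and suppose `A` has a right dual `Aᘁ` in `C`.  Transport
the duality data along `F` and `G`, and let `m : G(Aᘁ) ⟶ F(Aᘁ)` be the adjoint mate of
`θ_A` with respect to the transported pairings.  Then `θ_{Aᘁ}` is invertible with inverse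
`m`.  In particular, if `C` is autonomous (rigid), every monoidal natural transformation
between strong monoidal functors out of `C` has all components invertible. -/
theorem saavedra_rivano {C D : Type*} [Category C] [Category D]
    [MonoidalCategory C] [MonoidalCategory D]
    (F G : C ⥤ D) [F.Monoidal] [G.Monoidal] (θ : F ⟶ G) [NatTrans.IsMonoidal θ]
    (A : C) [HasRightDual A] :
    (let coevF : 𝟙_ D ⟶ F.obj A ⊗ F.obj (Aᘁ) :=
        Functor.LaxMonoidal.ε F ≫ F.map (η_ A (Aᘁ)) ≫ Functor.OplaxMonoidal.δ F A (Aᘁ);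
      let evG : G.obj (Aᘁ) ⊗ G.obj A ⟶ 𝟙_ D :=
        Functor.LaxMonoidal.μ G (Aᘁ) A ≫ G.map (ε_ A (Aᘁ)) ≫ Functor.OplaxMonoidal.η G;
      let m : G.obj (Aᘁ) ⟶ F.obj (Aᘁ) :=
        (ρ_ (G.obj (Aᘁ))).inv ≫ (G.obj (Aᘁ) ◁ coevF) ≫
          (G.obj (Aᘁ) ◁ (θ.app A ▷ F.obj (Aᘁ))) ≫ (α_ _ _ _).inv ≫
          (evG ▷ F.obj (Aᘁ)) ≫ (λ_ _).hom;
      θ.app (Aᘁ) ≫ m = 𝟙 _ ∧ m ≫ θ.app (Aᘁ) = 𝟙 _) ∧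
    (∀ (_ : RigidCategory C) (B : C), IsIso (θ.app B)) := by
  constructor
  · exact ⟨(keySR F G θ A (Aᘁ)).1, (keySR F G θ A (Aᘁ)).2⟩
  · intro _ B
    obtain ⟨h1, h2⟩ := keySR F G θ (ᘁB) B
    exact ⟨_, h1, h2⟩
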